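/- For every real t ≥ (1/10)√(120√1066 − 3899), the 5×5 matrix A = [[0,1,0,0,0],[(1501+100t²)/200,0,1,0,0],[0,0,0,1,0],[0,0,0,0,1],[(15000t⁴+289950t²+14649)/5000,(10000t⁴+779800t²−148199)/40000,(150t²+249)/25,(1501+100t²)/200,0]] is entrywise nonnegative and has characteristic polynomial (x−(3+t))(x−(3−t))(x+1.9)(x+2)(x+2.1). -/

import Mathlib

set_option maxHeartbeats 1600000
open Polynomial

lemma det5aux {R : Type*} [CommRing R] (x a b c d : R) :
    (!![x,-1,0,0,0; -a,x,-1,0,0; 0,0,x,-1,0; 0,0,0,x,-1; -b,-c,-d,-a,x]).det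
      = x^5 - 2*a*x^3 - d*x^2 + (a^2 - c)*x + (a*d - b) := by
  simp [Matrix.det_succ_row_zero, Fin.sum_univ_succ, Fin.succAbove]
  ring

theorem perturbed_list_realization (t : ℝ)
    (ht : t ≥ (1 / 10) * Real.sqrt (120 * Real.sqrt 1066 - 3899)) :
    let A : Matrix (Fin 5) (Fin 5) ℝ :=
      !![0, 1, 0, 0, 0;
         (1501 + 100 * t ^ 2) / 200, 0, 1, 0, 0;
         0, 0, 0, 1, 0;
         0, 0, 0, 0, 1;
         (15000 * t ^ 4 + 289950 * t ^ 2 + 14649) / 5000,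
           (10000 * t ^ 4 + 779800 * t ^ 2 - 148199) / 40000,
           (150 * t ^ 2 + 249) / 25, (1501 + 100 * t ^ 2) / 200, 0]
    (∀ i j, 0 ≤ A i j) ∧
      A.charpoly = (X - C (3 + t)) * (X - C (3 - t)) *
        (X + C (19 / 10)) * (X + C 2) * (X + C (21 / 10)) := by
  intro A
  -- basic facts about the square roots
  have hs : Real.sqrt 1066 ^ 2 = 1066 := Real.sq_sqrt (by norm_num)
  have hs' : (0:ℝ) ≤ Real.sqrt 1066 := Real.sqrt_nonneg _
  have hslb : (3899:ℝ)/120 ≤ Real.sqrt 1066 := by nlinarith [hs, hs']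
  have h0 : (0:ℝ) ≤ 120 * Real.sqrt 1066 - 3899 := by linarith
  have hq : Real.sqrt (120 * Real.sqrt 1066 - 3899) ^ 2 = 120 * Real.sqrt 1066 - 3899 :=
    Real.sq_sqrt h0
  have hq' : (0:ℝ) ≤ Real.sqrt (120 * Real.sqrt 1066 - 3899) := Real.sqrt_nonneg _
  have ht0 : 0 ≤ t := le_trans (by positivity) ht
  have ht2 : t ^ 2 ≥ (120 * Real.sqrt 1066 - 3899) / 100 := by
    nlinarith [ht, hq, hq', ht0]
  have key : 0 ≤ 10000 * t ^ 4 + 779800 * t ^ 2 - 148199 := by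
    nlinarith [ht2, hs, h0, sq_nonneg t]
  constructor
  · intro i j
    fin_cases i <;> fin_cases j <;>
      simp [A, Matrix.cons_val_zero, Matrix.cons_val_one] <;> positivity
  · have hM : A.charmatrix =
        !![(X:ℝ[X]), -1, 0, 0, 0;
           -C ((1501 + 100 * t ^ 2) / 200), X, -1, 0, 0;
           0, 0, X, -1, 0;
           0, 0, 0, X, -1;
           -C ((15000 * t ^ 4 + 289950 * t ^ 2 + 14649) / 5000),
             -C ((10000 * t ^ 4 + 779800 * t ^ 2 - 148199) / 40000),
             -C ((150 * t ^ 2 + 249) / 25), -C ((1501 + 100 * t ^ 2) / 200), X] := by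
      ext i j
      fin_cases i <;> fin_cases j <;>
        simp [A, Matrix.charmatrix_apply]
    rw [Matrix.charpoly, hM, det5aux]
    apply Polynomial.funext
    intro x
    simp only [eval_add, eval_sub, eval_mul, eval_pow, eval_X, eval_C, eval_one, eval_ofNat,
      eval_neg]
    ring
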